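/- Let H(ρ,θ) = ρ^{1/2} cos(θ/2) with τ = ρcos θ, η = ρ sin θ, θ ∈ (0,π). If (τ₁,η) and (τ₂,η) satisfy |τ₁ − τ₂| ≤ (1/2)|(τ₂,η)| (with both points having η > 0), then H_τ(τ₁,η)/H_τ(τ₂,η) ≤ C for a universal constant C. -/

import Mathlib

open Real Set

/-- The function `H(τ,η) = ρ^{1/2} cos(θ/2)` in Cartesian coordinates, where
`ρ = √(τ²+η²)` and `θ = arg(τ + iη)`. -/
noncomputable def Hcart (τ η : ℝ) : ℝ :=
  Real.sqrt (Real.sqrt (τ ^ 2 + η ^ 2)) * Real.cos (Complex.arg ⟨τ, η⟩ / 2)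

lemma rho_pos (τ : ℝ) {η : ℝ} (hη : 0 < η) : 0 < Real.sqrt (τ ^ 2 + η ^ 2) :=
  Real.sqrt_pos.2 (by positivity)

lemma abs_lt_rho (τ : ℝ) {η : ℝ} (hη : 0 < η) : |τ| < Real.sqrt (τ ^ 2 + η ^ 2) := by
  rw [← Real.sqrt_sq_eq_abs]
  exact Real.sqrt_lt_sqrt (by positivity) (by nlinarith)

lemma hcart_eq {η : ℝ} (hη : 0 < η) (τ : ℝ) :
    Hcart τ η = Real.sqrt ((Real.sqrt (τ ^ 2 + η ^ 2) + τ) / 2) := by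
  have hz : (⟨τ, η⟩ : ℂ) ≠ 0 := by
    simp [Complex.ext_iff, hη.ne']
  have habs : ‖(⟨τ, η⟩ : ℂ)‖ = Real.sqrt (τ ^ 2 + η ^ 2) := by
    rw [Complex.norm_def, Complex.normSq_mk]; ring_nf
  have hρ := rho_pos τ hη
  rw [Hcart, Real.cos_half (Complex.neg_pi_lt_arg _).le (Complex.arg_le_pi _),
    Complex.cos_arg hz, habs, ← Real.sqrt_mul hρ.le]
  congr 1
  field_simp

lemma hcart_hasDerivAt {η : ℝ} (hη : 0 < η) (τ : ℝ) :
    HasDerivAt (fun t : ℝ => Hcart t η)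
      (Hcart τ η / (2 * Real.sqrt (τ ^ 2 + η ^ 2))) τ := by
  have hρ := rho_pos τ hη
  have hτρ := abs_lt_rho τ hη
  have hg : 0 < (Real.sqrt (τ ^ 2 + η ^ 2) + τ) / 2 := by
    have := neg_abs_le τ; linarith
  have h1 : HasDerivAt (fun t : ℝ => t ^ 2 + η ^ 2) (2 * τ) τ := by
    simpa using (hasDerivAt_pow 2 τ).add_const (η ^ 2)
  have h2 : HasDerivAt (fun t : ℝ => Real.sqrt (t ^ 2 + η ^ 2))
      (1 / (2 * Real.sqrt (τ ^ 2 + η ^ 2)) * (2 * τ)) τ :=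
    (Real.hasDerivAt_sqrt (by positivity)).comp τ h1
  have h3 : HasDerivAt (fun t : ℝ => (Real.sqrt (t ^ 2 + η ^ 2) + t) / 2)
      ((1 / (2 * Real.sqrt (τ ^ 2 + η ^ 2)) * (2 * τ) + 1) / 2) τ :=
    (h2.add (hasDerivAt_id τ)).div_const 2
  have h4 := (Real.hasDerivAt_sqrt hg.ne').comp τ h3
  have hfun : (fun t : ℝ => Hcart t η)
      = fun t : ℝ => Real.sqrt ((Real.sqrt (t ^ 2 + η ^ 2) + t) / 2) :=
    funext (hcart_eq hη)
  rw [hfun, hcart_eq hη]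
  refine h4.congr_deriv ?_
  have hH : 0 < Real.sqrt ((Real.sqrt (τ ^ 2 + η ^ 2) + τ) / 2) := Real.sqrt_pos.2 hg
  have hH2 : Real.sqrt ((Real.sqrt (τ ^ 2 + η ^ 2) + τ) / 2) ^ 2
      = (Real.sqrt (τ ^ 2 + η ^ 2) + τ) / 2 := Real.sq_sqrt hg.le
  set ρ := Real.sqrt (τ ^ 2 + η ^ 2) with hρdef
  set H := Real.sqrt ((ρ + τ) / 2) with hHdef
  clear_value H ρ
  field_simp
  linear_combination (-2) * hH2


set_option maxHeartbeats 1000000 in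
/-- Doubling estimate for `H_τ`: there is a universal constant `C` such
that `H_τ(τ₁,η)/H_τ(τ₂,η) ≤ C` whenever `η > 0` and `|τ₁-τ₂| ≤ (1/2)|(τ₂,η)|`. -/
theorem stmt_14 :
    ∃ C > 0, ∀ τ₁ τ₂ η : ℝ, 0 < η →
      |τ₁ - τ₂| ≤ (1 / 2) * Real.sqrt (τ₂ ^ 2 + η ^ 2) →
      deriv (fun t : ℝ => Hcart t η) τ₁ / deriv (fun t : ℝ => Hcart t η) τ₂ ≤ C := by
  refine ⟨5, by norm_num, ?_⟩
  intro τ₁ τ₂ η hη hd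
  set ρ₁ := Real.sqrt (τ₁ ^ 2 + η ^ 2) with hρ₁def
  set ρ₂ := Real.sqrt (τ₂ ^ 2 + η ^ 2) with hρ₂def
  have hρ₁ : 0 < ρ₁ := rho_pos τ₁ hη
  have hρ₂ : 0 < ρ₂ := rho_pos τ₂ hη
  have hτ₁ : |τ₁| < ρ₁ := abs_lt_rho τ₁ hη
  have hτ₂ : |τ₂| < ρ₂ := abs_lt_rho τ₂ hη
  have hτ₁' := abs_lt.1 hτ₁
  have hτ₂' := abs_lt.1 hτ₂
  have hsq₁ : ρ₁ ^ 2 = τ₁ ^ 2 + η ^ 2 := Real.sq_sqrt (by positivity)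
  have hsq₂ : ρ₂ ^ 2 = τ₂ ^ 2 + η ^ 2 := Real.sq_sqrt (by positivity)
  have hdabs := abs_le.1 hd
  have habs1 := le_abs_self (τ₁ - τ₂)
  have habs2 := neg_abs_le (τ₁ - τ₂)
  have habsnn := abs_nonneg (τ₁ - τ₂)
  -- Lipschitz bounds on ρ
  have h12 : ρ₁ ≤ ρ₂ + |τ₁ - τ₂| := by
    have hb : τ₁ ^ 2 + η ^ 2 ≤ (ρ₂ + |τ₁ - τ₂|) ^ 2 := by
      nlinarith [sq_abs (τ₁ - τ₂), mul_nonneg hρ₂.le habsnn]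
    calc ρ₁ ≤ Real.sqrt ((ρ₂ + |τ₁ - τ₂|) ^ 2) := Real.sqrt_le_sqrt hb
      _ = ρ₂ + |τ₁ - τ₂| := Real.sqrt_sq (by positivity)
  have h21 : ρ₂ ≤ ρ₁ + |τ₁ - τ₂| := by
    have hb : τ₂ ^ 2 + η ^ 2 ≤ (ρ₁ + |τ₁ - τ₂|) ^ 2 := by
      nlinarith [sq_abs (τ₁ - τ₂), mul_nonneg hρ₁.le habsnn]
    calc ρ₂ ≤ Real.sqrt ((ρ₁ + |τ₁ - τ₂|) ^ 2) := Real.sqrt_le_sqrt hb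
      _ = ρ₁ + |τ₁ - τ₂| := Real.sqrt_sq (by positivity)
  have hd' : |τ₁ - τ₂| ≤ ρ₂ / 2 := by linarith
  have hρhalf : ρ₂ / 2 ≤ ρ₁ := by linarith
  -- key comparison
  have hR : ρ₁ + τ₁ ≤ 5 * (ρ₂ + τ₂) := by
    rcases le_or_gt (-(3 / 4) * ρ₂) τ₂ with hc | hc
    · linarith
    · have hlow : (3 / 4) * ρ₂ ≤ ρ₁ - τ₁ := by linarith
      have hXpos : 0 < ρ₁ - τ₁ := by linarith
      have hYpos : 0 < ρ₂ - τ₂ := by linarith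
      have e1 : (ρ₁ + τ₁) * (ρ₁ - τ₁) = η ^ 2 := by linear_combination hsq₁
      have e2 : (ρ₂ + τ₂) * (ρ₂ - τ₂) = η ^ 2 := by linear_combination hsq₂
      have key : (ρ₁ + τ₁) * ((ρ₁ - τ₁) * (ρ₂ - τ₂))
          ≤ 5 * (ρ₂ + τ₂) * ((ρ₁ - τ₁) * (ρ₂ - τ₂)) := by
        have k1 : (ρ₁ + τ₁) * ((ρ₁ - τ₁) * (ρ₂ - τ₂)) = η ^ 2 * (ρ₂ - τ₂) := by
          rw [← mul_assoc, e1]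
        have k2 : 5 * (ρ₂ + τ₂) * ((ρ₁ - τ₁) * (ρ₂ - τ₂))
            = 5 * (η ^ 2 * (ρ₁ - τ₁)) := by ring_nf; linear_combination (5 * (ρ₁ - τ₁)) * e2
        rw [k1, k2]
        nlinarith [mul_le_mul_of_nonneg_left hlow (sq_nonneg η), sq_nonneg η]
      exact le_of_mul_le_mul_right key (mul_pos hXpos hYpos)
  -- rewrite derivatives
  rw [(hcart_hasDerivAt hη τ₁).deriv, (hcart_hasDerivAt hη τ₂).deriv]
  have hH₁ : Hcart τ₁ η = Real.sqrt ((ρ₁ + τ₁) / 2) := hcart_eq hη τ₁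
  have hH₂ : Hcart τ₂ η = Real.sqrt ((ρ₂ + τ₂) / 2) := hcart_eq hη τ₂
  have hg₁ : 0 < (ρ₁ + τ₁) / 2 := by linarith
  have hg₂ : 0 < (ρ₂ + τ₂) / 2 := by linarith
  have hH₁pos : 0 < Hcart τ₁ η := by rw [hH₁]; exact Real.sqrt_pos.2 hg₁
  have hH₂pos : 0 < Hcart τ₂ η := by rw [hH₂]; exact Real.sqrt_pos.2 hg₂
  have hH₁sq : Hcart τ₁ η ^ 2 = (ρ₁ + τ₁) / 2 := by rw [hH₁]; exact Real.sq_sqrt hg₁.le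
  have hH₂sq : Hcart τ₂ η ^ 2 = (ρ₂ + τ₂) / 2 := by rw [hH₂]; exact Real.sq_sqrt hg₂.le
  rw [div_le_iff₀ (by positivity)]
  -- goal: H₁/(2ρ₁) ≤ 5 * (H₂/(2ρ₂))
  have hmain : Hcart τ₁ η * ρ₂ ≤ 5 * Hcart τ₂ η * ρ₁ := by
    have hs : (Hcart τ₁ η * ρ₂) ^ 2 ≤ (5 * Hcart τ₂ η * ρ₁) ^ 2 := by
      have expand1 : (Hcart τ₁ η * ρ₂) ^ 2 = ((ρ₁ + τ₁) / 2) * ρ₂ ^ 2 := by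
        rw [mul_pow, hH₁sq]
      have expand2 : (5 * Hcart τ₂ η * ρ₁) ^ 2 = 25 * ((ρ₂ + τ₂) / 2) * ρ₁ ^ 2 := by
        rw [mul_pow, mul_pow, hH₂sq]; ring
      rw [expand1, expand2]
      have q1 : ρ₂ ^ 2 ≤ 4 * ρ₁ ^ 2 := by nlinarith
      linarith [mul_le_mul_of_nonneg_right hR (sq_nonneg ρ₂),
        mul_le_mul_of_nonneg_left q1 (by linarith : (0:ℝ) ≤ ρ₂ + τ₂),
        mul_nonneg (by linarith : (0:ℝ) ≤ ρ₂ + τ₂) (sq_nonneg ρ₁)]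
    have := Real.sqrt_le_sqrt hs
    rwa [Real.sqrt_sq (by positivity), Real.sqrt_sq (by positivity)] at this
  calc Hcart τ₁ η / (2 * ρ₁)
      = (Hcart τ₁ η * ρ₂) / (2 * ρ₁ * ρ₂) := by
        rw [mul_div_mul_right _ _ hρ₂.ne']
    _ ≤ (5 * Hcart τ₂ η * ρ₁) / (2 * ρ₁ * ρ₂) := by
        apply div_le_div_of_nonneg_right ?_ (by positivity)
        exact hmain
    _ = 5 * (Hcart τ₂ η / (2 * ρ₂)) := by
        field_simp
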